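/- Let a ∈ H_R with a[0] = 1 over a commutative ℚ-algebra R, and write p_n^{(a)}(x) = ∑_{j=0}^{n} c_j x^j for the binomial-type polynomials associated to a. Then c_j = ∑_{h=0}^{n-j} (-1)^h (n!/(h+j)!) s(h+j, j) B_{n, h+j}(a_1, ..., a_{n-h-j+1}), where s(k,j) are unsigned Stirling numbers of the first kind and B_{n,k} are partial ordinary Bell polynomials. -/

import Mathlib

/-- The partial ordinary Bell polynomials `B_{n,k}(x_1, x_2, ...)`, defined by
`(∑_{m ≥ 1} x_m z^m)^k = ∑_{n ≥ k} B_{n,k} z^n`. -/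
noncomputable def obell {R : Type*} [CommRing R] (x : ℕ → R) (n k : ℕ) : R :=
  PowerSeries.coeff (R := R) n ((PowerSeries.mk fun m => if m = 0 then 0 else x m) ^ k)

/-- The exponential generating function of a sequence, over a `ℚ`-algebra. -/
noncomputable def egf {R : Type*} [CommRing R] [Algebra ℚ R] (a : ℕ → R) : PowerSeries R :=
  PowerSeries.mk fun n => algebraMap ℚ R (1 / n.factorial) * a n

/-- The binomial coefficient polynomial `C(x,k) = x(x-1)⋯(x-k+1)/k!`. -/
noncomputable def binomPoly {R : Type*} [CommRing R] [Algebra ℚ R] (k : ℕ) : Polynomial R :=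
  Polynomial.C (algebraMap ℚ R (1 / k.factorial)) *
    ∏ i ∈ Finset.range k, (Polynomial.X - (i : Polynomial R))

/-- The binomial-type polynomial sequence `p_n^{(a)}(x)`, the coefficients (times `n!`)
of `(A(t))^x = ∑_k C(x,k) (A(t)-1)^k`. -/
noncomputable def paseq {R : Type*} [CommRing R] [Algebra ℚ R] (a : ℕ → R) (n : ℕ) :
    Polynomial R :=
  (n.factorial : Polynomial R) *
    PowerSeries.coeff (R := Polynomial R) n
      (∑ k ∈ Finset.range (n + 1),
        PowerSeries.C (R := Polynomial R) (binomPoly k) *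
          (PowerSeries.map (Polynomial.C) (egf a) - 1) ^ k)

/-- Unsigned Stirling numbers of the first kind. -/
def S1 : ℕ → ℕ → ℕ
  | 0, 0 => 1
  | 0, _ + 1 => 0
  | _ + 1, 0 => 0
  | n + 1, k + 1 => n * S1 n (k + 1) + S1 n k

lemma S1_eq_zero : ∀ {k j : ℕ}, k < j → S1 k j = 0
  | 0, _ + 1, _ => rfl
  | k + 1, j + 1, h => by
    have h' : k < j := by omega
    simp [S1, S1_eq_zero h', S1_eq_zero (Nat.lt_succ_of_lt h')]

lemma desc_coeff {R : Type*} [CommRing R] (k j : ℕ) :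
    (∏ i ∈ Finset.range k, (Polynomial.X - (i : Polynomial R))).coeff j =
      (-1 : R) ^ (k - j) * S1 k j := by
  induction k generalizing j with
  | zero =>
    cases j with
    | zero => simp [S1]
    | succ m => simp [S1, Polynomial.coeff_one]
  | succ k ih =>
    rw [Finset.prod_range_succ, mul_sub]
    have hc : ((k : Polynomial R)) = Polynomial.C (k : R) := by simp
    rw [hc]
    cases j with
    | zero =>
      rw [Polynomial.coeff_sub, Polynomial.mul_coeff_zero, Polynomial.coeff_X_zero,
        mul_zero, Polynomial.coeff_mul_C, ih 0]
      cases k with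
      | zero => simp [S1]
      | succ k' => simp [S1, S1_eq_zero (Nat.succ_pos k')]
    | succ m =>
      rw [Polynomial.coeff_sub, Polynomial.coeff_mul_X, Polynomial.coeff_mul_C, ih m,
        ih (m + 1)]
      rcases le_or_gt (m + 1) k with hm | hm
      · have h1 : k - m = (k - (m + 1)) + 1 := by omega
        have h2 : k + 1 - (m + 1) = k - (m + 1) + 1 := by omega
        rw [h1, h2]
        cases k with
        | zero => omega
        | succ k' =>
          show _ = _ * (S1 (k' + 1 + 1) (m + 1) : R)
          rw [show S1 (k' + 1 + 1) (m + 1) = (k' + 1) * S1 (k' + 1) (m + 1) + S1 (k' + 1) m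
            from rfl]
          push_cast; ring
      · have h1 : k - m = 0 := by omega
        have h2 : k + 1 - (m + 1) = 0 := by omega
        have h3 : k - (m + 1) = 0 := by omega
        rw [h1, h2, h3, S1_eq_zero (by omega : k < m + 1)]
        cases k with
        | zero =>
          show _ = _ * (S1 1 (m+1) : R)
          rw [show S1 1 (m+1) = 0 * S1 0 (m+1) + S1 0 m from rfl]
          push_cast; ring
        | succ k' =>
          show _ = _ * (S1 (k'+1+1) (m+1) : R)
          rw [show S1 (k'+1+1) (m+1) = (k'+1) * S1 (k'+1) (m+1) + S1 (k'+1) m from rfl,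
            S1_eq_zero (by omega : k' + 1 < m + 1)]
          push_cast; ring

/-- Closed form for the coefficients of the binomial-type polynomials
`p_n^{(a)}(x) = ∑_j c_j x^j`. -/
theorem paseq_coeff {R : Type*} [CommRing R] [Algebra ℚ R] (a : ℕ → R) (ha : a 0 = 1)
    (n j : ℕ) (hj : j ≤ n) :
    (paseq a n).coeff j =
      ∑ h ∈ Finset.range (n - j + 1),
        (-1 : R) ^ h * algebraMap ℚ R (n.factorial / (h + j).factorial) * (S1 (h + j) j : R) *
          obell (fun m => algebraMap ℚ R (1 / m.factorial) * a m) n (h + j) := by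
  set x : ℕ → R := fun m => algebraMap ℚ R (1 / m.factorial) * a m with hx
  set b : PowerSeries R := PowerSeries.mk fun m => if m = 0 then 0 else x m with hb
  have hegf : PowerSeries.map (Polynomial.C) (egf a) - 1 =
      PowerSeries.map (Polynomial.C) b := by
    have : egf a - 1 = b := by
      ext m
      cases m with
      | zero => simp [egf, hb, hx, ha]
      | succ m => simp [egf, hb, hx]
    rw [← this, map_sub, map_one]
  have hcoeff : ∀ k, PowerSeries.coeff (R := Polynomial R) n
      ((PowerSeries.map (Polynomial.C) (egf a) - 1) ^ k) = Polynomial.C (obell x n k) := by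
    intro k
    rw [hegf, ← map_pow, PowerSeries.coeff_map, obell]
  -- compute paseq coefficient
  have hps : (paseq a n).coeff j =
      ∑ k ∈ Finset.range (n + 1),
        (n.factorial : R) * ((binomPoly k : Polynomial R).coeff j * obell x n k) := by
    rw [paseq, map_sum]
    have : ∀ k ∈ Finset.range (n + 1),
        PowerSeries.coeff (R := Polynomial R) n
          (PowerSeries.C (R := Polynomial R) (binomPoly k) *
            (PowerSeries.map (Polynomial.C) (egf a) - 1) ^ k) =
        binomPoly k * Polynomial.C (obell x n k) := by
      intro k _
      rw [PowerSeries.coeff_C_mul, hcoeff k]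
    rw [Finset.sum_congr rfl this]
    rw [show ((n.factorial : Polynomial R)) = Polynomial.C ((n.factorial : R)) by simp,
      Polynomial.coeff_C_mul, Polynomial.finset_sum_coeff, Finset.mul_sum]
    refine Finset.sum_congr rfl fun k _ => ?_
    rw [Polynomial.coeff_mul_C]
  rw [hps]
  have hterm : ∀ k, (n.factorial : R) * ((binomPoly k : Polynomial R).coeff j * obell x n k) =
      (-1 : R) ^ (k - j) * (algebraMap ℚ R ((n.factorial : ℚ) / k.factorial)) *
        (S1 k j : R) * obell x n k := by
    intro k
    rw [binomPoly, Polynomial.coeff_C_mul, desc_coeff]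
    have : (algebraMap ℚ R) ((n.factorial : ℚ) / k.factorial) =
        (n.factorial : R) * algebraMap ℚ R (1 / k.factorial) := by
      rw [div_eq_mul_one_div, map_mul, map_natCast]
    rw [this]; ring
  rw [Finset.sum_congr rfl fun k _ => hterm k]
  -- drop the first j terms (they vanish) and reindex
  have hsplit : Finset.range (n + 1) = Finset.Ico 0 j ∪ Finset.Ico j (n + 1) := by
    rw [Finset.range_eq_Ico, Finset.Ico_union_Ico_eq_Ico (Nat.zero_le j) (by omega)]
  rw [hsplit, Finset.sum_union (by
    simp [Finset.disjoint_left]; omega)]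
  have hzero : ∑ k ∈ Finset.Ico 0 j,
      (-1 : R) ^ (k - j) * (algebraMap ℚ R ((n.factorial : ℚ) / k.factorial)) *
        (S1 k j : R) * obell x n k = 0 := by
    refine Finset.sum_eq_zero fun k hk => ?_
    rw [Finset.mem_Ico] at hk
    rw [S1_eq_zero hk.2]
    simp
  rw [hzero, zero_add, Finset.sum_Ico_eq_sum_range]
  rw [show n + 1 - j = n - j + 1 by omega]
  refine Finset.sum_congr rfl fun h _ => ?_
  rw [show j + h - j = h by omega, show j + h = h + j by omega]
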